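/- Let φ : (0,∞) → (0,∞) be a nondecreasing continuous function (extended continuously to [0,∞)) and define the measure dν = φ(x)dx on (0,∞). If M = ⋃_{j=1}^k (a_j, b_j) is a finite union of disjoint intervals with 0 ≤ a_j < b_j, b_j ≤ a_{j+1}, and d ≥ 0 is chosen so that ν((0,d)) = ν(M), then the weighted perimeter satisfies ∑_{j=1}^k (φ(a_j) + φ(b_j)) ≥ φ(0) + φ(d). -/

import Mathlib

open Real Set MeasureTheory Finset

/-- For a nondecreasing continuous weight `φ` on `[0,∞)`, if `M = ⋃_{j<k} (a j, b j)` is a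
finite union of disjoint intervals in `(0,∞)` (ordered, `b j ≤ a (j+1)`) and `d ≥ 0` is
such that `∫_0^d φ = ν(M)`, then `∑_j (φ(a j) + φ(b j)) ≥ φ(0) + φ(d)`. -/
theorem perimeter_union_intervals (φ : ℝ → ℝ) (hφpos : ∀ x ∈ Ici (0:ℝ), 0 < φ x)
    (hφmono : MonotoneOn φ (Ici (0:ℝ))) (hφcont : ContinuousOn φ (Ici (0:ℝ)))
    (k : ℕ) (hk : 0 < k) (a b : Fin k → ℝ)
    (ha : ∀ j, 0 ≤ a j) (hab : ∀ j, a j < b j)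
    (horder : ∀ (j j' : Fin k), (j:ℕ) + 1 = j' → b j ≤ a j')
    (d : ℝ) (hd : 0 ≤ d)
    (hmeas : ∫ x in Ioc (0:ℝ) d, φ x = ∑ j, ∫ x in Ioo (a j) (b j), φ x) :
    ∑ j, (φ (a j) + φ (b j)) ≥ φ 0 + φ d := by
  -- chain lemma: i < j → b i ≤ a j
  have hchain : ∀ n (hn : n < k) (i : Fin k), (i : ℕ) < n → b i ≤ a ⟨n, hn⟩ := by
    intro n
    induction n with
    | zero => intro hn i hi; omega
    | succ m ih =>
      intro hn i hi
      have hm : m < k := lt_trans (Nat.lt_succ_self m) hn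
      rcases Nat.lt_or_ge (i : ℕ) m with h | h
      · exact le_trans (ih hm i h)
          (le_trans (le_of_lt (hab ⟨m, hm⟩)) (horder ⟨m, hm⟩ ⟨m+1, hn⟩ rfl))
      · have : (i : ℕ) = m := by omega
        exact horder i ⟨m+1, hn⟩ (by simp [this])
  have hba : ∀ i j : Fin k, (i : ℕ) < (j : ℕ) → b i ≤ a j := by
    intro i j hij
    have := hchain (j : ℕ) j.isLt i hij
    simpa using this
  -- the last interval
  set L : Fin k := ⟨k - 1, by omega⟩ with hL
  set B : ℝ := b L with hB
  have hBle : ∀ j : Fin k, b j ≤ B := by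
    intro j
    rcases eq_or_lt_of_le (Nat.le_pred_of_lt j.isLt) with h | h
    · have : j = L := Fin.ext h
      rw [this]
    · exact le_trans (hba j L h) (le_of_lt (hab L))
  have hB0 : (0:ℝ) ≤ B := le_trans (ha L) (le_of_lt (hab L))
  -- integrability on compact intervals
  set C : ℝ := max d B with hC
  have hC0 : (0:ℝ) ≤ C := le_trans hd (le_max_left _ _)
  have hint : IntegrableOn φ (Icc 0 C) := by
    apply ContinuousOn.integrableOn_Icc
    exact hφcont.mono (fun x hx => hx.1)
  have hintsub : ∀ s : Set ℝ, s ⊆ Icc 0 C → IntegrableOn φ s :=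
    fun s hs => hint.mono_set hs
  -- subsets
  have hsubIoo : ∀ j : Fin k, Ioo (a j) (b j) ⊆ Icc 0 C := by
    intro j x hx
    exact ⟨le_trans (ha j) (le_of_lt hx.1),
      le_trans (le_of_lt hx.2) (le_trans (hBle j) (le_max_right _ _))⟩
  -- sum of integrals equals integral over union
  have hdpair : ∀ i j : Fin k, b i ≤ a j → Disjoint (Ioo (a i) (b i)) (Ioo (a j) (b j)) := by
    intro i j h
    refine Set.disjoint_left.2 fun x hx hx' => ?_
    have := hx.2; have := hx'.1; linarith
  have hdisj : (Set.univ : Set (Fin k)).Pairwise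
      (Function.onFun Disjoint fun j => Ioo (a j) (b j)) := by
    intro i _ j _ hij
    rcases Nat.lt_or_ge (i : ℕ) (j : ℕ) with h | h
    · exact hdpair i j (hba i j h)
    · have h' : (j : ℕ) < (i : ℕ) := by
        rcases Nat.lt_or_ge (j : ℕ) (i : ℕ) with h2 | h2
        · exact h2
        · exact absurd (Fin.ext (le_antisymm h2 h)) hij
      exact (hdpair j i (hba j i h')).symm
  have hunion : (∑ j, ∫ x in Ioo (a j) (b j), φ x) =
      ∫ x in ⋃ j ∈ (Finset.univ : Finset (Fin k)), Ioo (a j) (b j), φ x := by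
    rw [MeasureTheory.integral_biUnion_finset]
    · intro i _; exact measurableSet_Ioo
    · simpa using hdisj
    · intro i _; exact hintsub _ (hsubIoo i)
  -- union is contained in Ioc 0 B
  have hUsub : (⋃ j ∈ (Finset.univ : Finset (Fin k)), Ioo (a j) (b j)) ⊆ Ioc 0 B := by
    intro x hx
    simp only [Set.mem_iUnion] at hx
    obtain ⟨j, _, hj⟩ := hx
    exact ⟨lt_of_le_of_lt (ha j) hj.1, le_trans (le_of_lt hj.2) (hBle j)⟩
  have hIocBsub : Ioc (0:ℝ) B ⊆ Icc 0 C :=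
    fun x hx => ⟨le_of_lt hx.1, le_trans hx.2 (le_max_right _ _)⟩
  have hphi_nonneg : ∀ x ∈ Icc (0:ℝ) C, 0 ≤ φ x :=
    fun x hx => le_of_lt (hφpos x hx.1)
  have hmono_int : (∫ x in ⋃ j ∈ (Finset.univ : Finset (Fin k)), Ioo (a j) (b j), φ x)
      ≤ ∫ x in Ioc (0:ℝ) B, φ x := by
    apply MeasureTheory.setIntegral_mono_set (hintsub _ hIocBsub)
    · filter_upwards [MeasureTheory.ae_restrict_mem measurableSet_Ioc] with x hx
      exact hphi_nonneg x (hIocBsub hx)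
    · exact HasSubset.Subset.eventuallyLE hUsub
  -- hence ∫_{Ioc 0 d} φ ≤ ∫_{Ioc 0 B} φ
  have hkey : (∫ x in Ioc (0:ℝ) d, φ x) ≤ ∫ x in Ioc (0:ℝ) B, φ x := by
    rw [hmeas, hunion]; exact hmono_int
  -- conclude d ≤ B
  have hdB : d ≤ B := by
    by_contra hcon
    push_neg at hcon
    have hsplit : Ioc (0:ℝ) d = Ioc 0 B ∪ Ioc B d := (Set.Ioc_union_Ioc_eq_Ioc hB0 (le_of_lt hcon)).symm
    have hdisj2 : Disjoint (Ioc (0:ℝ) B) (Ioc B d) := Set.Ioc_disjoint_Ioc_of_le le_rfl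
    have hI1 : IntegrableOn φ (Ioc (0:ℝ) B) := hintsub _ hIocBsub
    have hI2 : IntegrableOn φ (Ioc B d) := hintsub _
      (fun x hx => ⟨le_trans hB0 (le_of_lt hx.1), le_trans hx.2 (le_max_left _ _)⟩)
    have heq : (∫ x in Ioc (0:ℝ) d, φ x)
        = (∫ x in Ioc (0:ℝ) B, φ x) + ∫ x in Ioc B d, φ x := by
      rw [hsplit]
      exact MeasureTheory.setIntegral_union hdisj2 measurableSet_Ioc hI1 hI2
    have hpos2 : 0 < ∫ x in Ioc B d, φ x := by
      have hconst : (∫ x in Ioc B d, (φ 0 : ℝ)) ≤ ∫ x in Ioc B d, φ x := by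
        apply MeasureTheory.setIntegral_mono_on (integrableOn_const ?_) hI2
          measurableSet_Ioc
        · intro x hx
          exact hφmono Set.self_mem_Ici (le_trans hB0 (le_of_lt hx.1)) (le_trans hB0 (le_of_lt hx.1))
        · rw [Real.volume_Ioc]; exact ENNReal.ofReal_ne_top
      have : (∫ x in Ioc B d, (φ 0 : ℝ)) = (d - B) * φ 0 := by
        rw [MeasureTheory.setIntegral_const, Real.volume_real_Ioc_of_le (by linarith), smul_eq_mul]
      rw [this] at hconst
      have : 0 < (d - B) * φ 0 := mul_pos (by linarith) (hφpos 0 Set.self_mem_Ici)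
      linarith
    linarith [hkey, heq]
  -- finish
  have hterm_nonneg : ∀ j : Fin k, (0:ℝ) ≤ φ (a j) := fun j => le_of_lt (hφpos _ (ha j))
  have hterm_nonneg' : ∀ j : Fin k, (0:ℝ) ≤ φ (b j) :=
    fun j => le_of_lt (hφpos _ (le_trans (ha j) (le_of_lt (hab j))))
  have h0 : Fin.mk 0 hk ∈ (Finset.univ : Finset (Fin k)) := Finset.mem_univ _
  have hsum1 : φ (a ⟨0, hk⟩) ≤ ∑ j, φ (a j) :=
    Finset.single_le_sum (fun j _ => hterm_nonneg j) h0
  have hsum2 : φ (b L) ≤ ∑ j, φ (b j) :=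
    Finset.single_le_sum (fun j _ => hterm_nonneg' j) (Finset.mem_univ L)
  have h1 : φ 0 ≤ φ (a ⟨0, hk⟩) := hφmono Set.self_mem_Ici (ha _) (ha _)
  have h2 : φ d ≤ φ B := hφmono hd hB0 hdB
  have hsplit_sum : ∑ j, (φ (a j) + φ (b j)) = (∑ j, φ (a j)) + ∑ j, φ (b j) :=
    Finset.sum_add_distrib
  rw [ge_iff_le, hsplit_sum]
  calc φ 0 + φ d ≤ φ (a ⟨0, hk⟩) + φ (b L) := add_le_add h1 h2
    _ ≤ (∑ j, φ (a j)) + ∑ j, φ (b j) := add_le_add hsum1 hsum2
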